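/- For positive semidefinite matrices A, B with Tr(A+B)=1: 4 Tr(AB) ≤ 1 - ‖A-B‖₁², i.e., L(A,B) ≤ 1 - T(A,B)². -/

import Mathlib

open Matrix
open scoped ComplexOrder

/-- Trace norm `‖X‖₁ = Tr √(XᴴX)`. -/
noncomputable def traceNorm {n : Type*} [Fintype n] [DecidableEq n] (X : Matrix n n ℂ) : ℝ :=
  (((Matrix.posSemidef_conjTranspose_mul_self X).1.eigenvectorUnitary.1 *
      diagonal ((RCLike.ofReal : ℝ → ℂ) ∘ Real.sqrt ∘
        (Matrix.posSemidef_conjTranspose_mul_self X).1.eigenvalues) *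
      (star (Matrix.posSemidef_conjTranspose_mul_self X).1.eigenvectorUnitary : Matrix n n ℂ)).trace).re

/-- Fractional power `A^s` of a positive semidefinite matrix, defined spectrally with the
convention `0 ^ s = 0` for all real `s`. -/
noncomputable def Matrix.PosSemidef.rpow {n : Type*} [Fintype n] [DecidableEq n]
    {A : Matrix n n ℂ} (hA : A.PosSemidef) (s : ℝ) : Matrix n n ℂ :=
  hA.1.cfc (fun x => if x = 0 then 0 else x ^ s)

/-- Matrix logarithm of a positive semidefinite matrix, defined spectrally with the
convention `log 0 = 0` on the kernel. -/
noncomputable def Matrix.PosSemidef.log {n : Type*} [Fintype n] [DecidableEq n]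
    {A : Matrix n n ℂ} (hA : A.PosSemidef) : Matrix n n ℂ :=
  hA.1.cfc Real.log

section cfcHelpers

variable {n : Type*} [Fintype n] [DecidableEq n] {C : Matrix n n ℂ} (hC : C.IsHermitian)

namespace Matrix.IsHermitian

lemma cfc_mul' (f g : ℝ → ℝ) : hC.cfc f * hC.cfc g = hC.cfc (fun x => f x * g x) := by
  unfold Matrix.IsHermitian.cfc
  simp only [Unitary.conjStarAlgAut_apply]
  have h : (star hC.eigenvectorUnitary : Matrix n n ℂ) * hC.eigenvectorUnitary = 1 := by
    exact Unitary.star_mul_self_of_mem hC.eigenvectorUnitary.2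
  rw [show ∀ (a b c d e fm : Matrix n n ℂ), (a*b*c)*(d*e*fm) = a*(b*((c*d)*e))*fm by
    intros; simp only [mul_assoc]]
  rw [h, one_mul, diagonal_mul_diagonal]
  congr! with i
  simp

lemma cfc_add' (f g : ℝ → ℝ) : hC.cfc f + hC.cfc g = hC.cfc (fun x => f x + g x) := by
  unfold Matrix.IsHermitian.cfc
  simp only [Unitary.conjStarAlgAut_apply]
  rw [← add_mul, ← mul_add, diagonal_add]
  congr! with i
  simp

lemma cfc_sub' (f g : ℝ → ℝ) : hC.cfc f - hC.cfc g = hC.cfc (fun x => f x - g x) := by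
  unfold Matrix.IsHermitian.cfc
  simp only [Unitary.conjStarAlgAut_apply]
  rw [← sub_mul, ← mul_sub, diagonal_sub]
  congr! with i
  simp

lemma cfc_one' : hC.cfc (fun _ => 1) = 1 := by
  unfold Matrix.IsHermitian.cfc
  simp only [Unitary.conjStarAlgAut_apply]
  have : (diagonal (RCLike.ofReal ∘ (fun _ : ℝ => (1:ℝ)) ∘ hC.eigenvalues) : Matrix n n ℂ) = 1 := by
    simp [Function.comp_def, diagonal_one]
  rw [this, mul_one]
  exact Unitary.mul_star_self_of_mem hC.eigenvectorUnitary.2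

lemma cfc_id' : hC.cfc (fun x => x) = C := by
  unfold Matrix.IsHermitian.cfc
  exact hC.spectral_theorem.symm

lemma cfc_conjTranspose' (f : ℝ → ℝ) : (hC.cfc f)ᴴ = hC.cfc f := by
  unfold Matrix.IsHermitian.cfc
  simp only [Unitary.conjStarAlgAut_apply]
  rw [conjTranspose_mul, conjTranspose_mul,
    ← star_eq_conjTranspose (hC.eigenvectorUnitary : Matrix n n ℂ),
    ← star_eq_conjTranspose ((star hC.eigenvectorUnitary : Matrix n n ℂ)), star_star,
    diagonal_conjTranspose, mul_assoc]
  congr!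
  ext i
  simp [Pi.star_def, Function.comp_def]

lemma trace_cfc' (f : ℝ → ℝ) : (hC.cfc f).trace = ∑ i, (f (hC.eigenvalues i) : ℂ) := by
  unfold Matrix.IsHermitian.cfc
  simp only [Unitary.conjStarAlgAut_apply]
  rw [trace_mul_cycle]
  have h : (star hC.eigenvectorUnitary : Matrix n n ℂ) * hC.eigenvectorUnitary = 1 := by
    exact Unitary.star_mul_self_of_mem hC.eigenvectorUnitary.2
  rw [h, one_mul, trace_diagonal]
  simp

lemma cfc_posSemidef' (f : ℝ → ℝ) (hf : ∀ x, 0 ≤ f x) : (hC.cfc f).PosSemidef := by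
  unfold Matrix.IsHermitian.cfc
  apply PosSemidef.mul_mul_conjTranspose_same
  refine posSemidef_diagonal_iff.mpr fun i => ?_
  rw [Function.comp_apply, RCLike.nonneg_iff]
  constructor
  · simpa using hf _
  · simp

end Matrix.IsHermitian

end cfcHelpers

noncomputable def fnorm {n : Type*} [Fintype n] (X : Matrix n n ℂ) : ℝ :=
  Real.sqrt (∑ i, ∑ j, ‖X i j‖ ^ 2)

section frobHelpers

variable {n : Type*} [Fintype n] [DecidableEq n]

attribute [local instance] Matrix.frobeniusSeminormedAddCommGroup

omit [DecidableEq n] in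
lemma fnorm_eq (X : Matrix n n ℂ) : fnorm X = ‖X‖ := by
  rw [Matrix.frobenius_norm_def, fnorm, Real.sqrt_eq_rpow]
  norm_num

omit [DecidableEq n] in
lemma fnorm_nonneg (X : Matrix n n ℂ) : 0 ≤ fnorm X := Real.sqrt_nonneg _

omit [DecidableEq n] in
lemma fnorm_sq (X : Matrix n n ℂ) : fnorm X ^ 2 = ∑ i, ∑ j, ‖X i j‖ ^ 2 := by
  rw [fnorm, Real.sq_sqrt (by positivity)]

omit [DecidableEq n] in
lemma fnorm_conjTranspose (X : Matrix n n ℂ) : fnorm Xᴴ = fnorm X := by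
  rw [fnorm_eq, fnorm_eq, Matrix.frobenius_norm_conjTranspose]

lemma fnorm_mul_le (X Y : Matrix n n ℂ) : fnorm (X * Y) ≤ fnorm X * fnorm Y := by
  rw [fnorm_eq, fnorm_eq, fnorm_eq]
  exact Matrix.frobenius_norm_mul X Y

omit [DecidableEq n] in
lemma reTrace_mul_conjTranspose_eq (X : Matrix n n ℂ) :
    ((X * Xᴴ).trace).re = fnorm X ^ 2 := by
  rw [fnorm_sq, Matrix.trace, Complex.re_sum]
  congr 1; funext i
  rw [Matrix.diag_apply, Matrix.mul_apply, Complex.re_sum]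
  congr 1; funext j
  rw [Matrix.conjTranspose_apply, show star (X i j) = (starRingEnd ℂ) (X i j) from rfl,
    Complex.mul_conj]
  simp [Complex.normSq_eq_norm_sq, ← Complex.ofReal_pow]

omit [DecidableEq n] in
lemma reTrace_mul_conjTranspose_le (X Z : Matrix n n ℂ) :
    ((X * Zᴴ).trace).re ≤ fnorm X * fnorm Z := by
  have h1 : ((X * Zᴴ).trace).re ≤ ∑ i, ∑ j, ‖X i j‖ * ‖Z i j‖ := by
    rw [Matrix.trace, Complex.re_sum]
    refine Finset.sum_le_sum fun i _ => ?_
    rw [Matrix.diag_apply, Matrix.mul_apply, Complex.re_sum]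
    refine Finset.sum_le_sum fun j _ => ?_
    rw [Matrix.conjTranspose_apply]
    calc (X i j * star (Z i j)).re ≤ ‖X i j * star (Z i j)‖ := Complex.re_le_norm _
      _ = ‖X i j‖ * ‖Z i j‖ := by
          rw [norm_mul, show star (Z i j) = (starRingEnd ℂ) (Z i j) from rfl,
            Complex.norm_conj]
  refine h1.trans ?_
  have h2 : (∑ i, ∑ j, ‖X i j‖ * ‖Z i j‖) ^ 2 ≤
      (∑ i, ∑ j, ‖X i j‖ ^ 2) * (∑ i, ∑ j, ‖Z i j‖ ^ 2) := by
    rw [← Finset.sum_product' (f := fun i j => ‖X i j‖ * ‖Z i j‖),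
        ← Finset.sum_product' (f := fun i j => ‖X i j‖ ^ 2),
        ← Finset.sum_product' (f := fun i j => ‖Z i j‖ ^ 2)]
    exact Finset.sum_mul_sq_le_sq_mul_sq _ _ _
  have h3 : (0:ℝ) ≤ ∑ i, ∑ j, ‖X i j‖ * ‖Z i j‖ := by positivity
  have h4 : (∑ i, ∑ j, ‖X i j‖ * ‖Z i j‖) ^ 2 ≤ (fnorm X * fnorm Z) ^ 2 := by
    rw [mul_pow, fnorm_sq, fnorm_sq]; exact h2
  exact (pow_le_pow_iff_left₀ h3 (mul_nonneg (fnorm_nonneg _) (fnorm_nonneg _)) two_ne_zero).mp h4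

end frobHelpers

lemma traceNorm_eq' {n : Type*} [Fintype n] [DecidableEq n] (X : Matrix n n ℂ) :
    traceNorm X = ((Matrix.posSemidef_conjTranspose_mul_self X).1.cfc Real.sqrt).trace.re := rfl

section mainHelpers

variable {n : Type*} [Fintype n] [DecidableEq n]

lemma link_lemma {S Q M : Matrix n n ℂ} (hS : Sᴴ = S) (hQH : Qᴴ = Q) (hQQ : Q * Q = Q)
    (hM : S * S = M) : ((Q * M).trace).re = fnorm (S * Q) ^ 2 := by
  rw [← reTrace_mul_conjTranspose_eq]
  have h1 : (S * Q) * (S * Q)ᴴ = S * (Q * S) := by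
    rw [conjTranspose_mul, hQH, hS]
    calc S * Q * (Q * S) = S * ((Q * Q) * S) := by noncomm_ring
      _ = S * (Q * S) := by rw [hQQ]
  have h2 : (Q * M).trace = ((S * Q) * (S * Q)ᴴ).trace := by
    rw [h1]
    calc (Q * M).trace = (Q * (S * S)).trace := by rw [hM]
      _ = ((S * S) * Q).trace := trace_mul_comm _ _
      _ = ((S * (S * Q))).trace := by rw [mul_assoc]
      _ = ((S * Q) * S).trace := trace_mul_comm _ _
      _ = (S * (Q * S)).trace := by rw [mul_assoc]
  rw [h2]

lemma term_bound {S T Q R : Matrix n n ℂ} (hS : Sᴴ = S) (hT : Tᴴ = T)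
    (hQH : Qᴴ = Q) (hQQ : Q * Q = Q) (hRH : Rᴴ = R) (hRR : R * R = R) :
    ((Q * (S * S) * R * (T * T)).trace).re ≤
      fnorm (S * Q) * fnorm (S * R) * (fnorm (T * Q) * fnorm (T * R)) := by
  have hXe : (S * Q)ᴴ * (S * R) = Q * (S * S) * R := by
    rw [conjTranspose_mul, hQH, hS]; noncomm_ring
  have hZH : ((T * Q)ᴴ * (T * R))ᴴ = R * (T * T) * Q := by
    rw [conjTranspose_mul, conjTranspose_conjTranspose, conjTranspose_mul, hRH, hT]
    noncomm_ring
  have e : (Q * (S * S) * R) * (R * (T * T) * Q) = Q * (S * S) * R * (T * T) * Q := by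
    calc (Q * (S * S) * R) * (R * (T * T) * Q)
        = Q * (S * S) * (R * R) * (T * T) * Q := by noncomm_ring
      _ = _ := by rw [hRR]
  have e2 : Q * (Q * (S * S) * R * (T * T)) = (Q * Q) * (S * S) * R * (T * T) := by
    noncomm_ring
  have htrace : (Q * (S * S) * R * (T * T)).trace =
      (((S * Q)ᴴ * (S * R)) * ((T * Q)ᴴ * (T * R))ᴴ).trace := by
    calc (Q * (S * S) * R * (T * T)).trace
        = ((Q * Q) * (S * S) * R * (T * T)).trace := by rw [hQQ]
      _ = (Q * (Q * (S * S) * R * (T * T))).trace := by rw [e2]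
      _ = ((Q * (S * S) * R * (T * T)) * Q).trace := trace_mul_comm _ _
      _ = ((Q * (S * S) * R) * (R * (T * T) * Q)).trace := by rw [e]
      _ = _ := by rw [hXe, hZH]
  rw [htrace]
  calc ((((S * Q)ᴴ * (S * R)) * ((T * Q)ᴴ * (T * R))ᴴ).trace).re
      ≤ fnorm ((S * Q)ᴴ * (S * R)) * fnorm ((T * Q)ᴴ * (T * R)) :=
        reTrace_mul_conjTranspose_le _ _
    _ ≤ fnorm (S * Q) * fnorm (S * R) * (fnorm (T * Q) * fnorm (T * R)) := by
        have hx := fnorm_mul_le ((S * Q)ᴴ) (S * R)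
        have hz := fnorm_mul_le ((T * Q)ᴴ) (T * R)
        rw [fnorm_conjTranspose] at hx hz
        exact mul_le_mul hx hz (fnorm_nonneg _) (mul_nonneg (fnorm_nonneg _) (fnorm_nonneg _))

end mainHelpers

/-- `L(A,B) ≤ 1 - T(A,B)²`: for positive semidefinite `A`, `B` with `Tr A + Tr B = 1`,
`4 Tr(AB) ≤ 1 - ‖A-B‖₁²`. -/
theorem stmt18 {n : Type*} [Fintype n] [DecidableEq n]
    {A B : Matrix n n ℂ} (hA : A.PosSemidef) (hB : B.PosSemidef)
    (htr : A.trace + B.trace = 1) :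
    4 * ((A * B).trace).re ≤ 1 - (traceNorm (A - B)) ^ 2 := by
  set D := A - B with hD
  have hC : D.IsHermitian := hA.1.sub hB.1
  set f : ℝ → ℝ := fun x => if 0 < x then 1 else 0 with hf
  set g : ℝ → ℝ := fun x => if 0 < x then 0 else 1 with hg
  set P := hC.cfc f with hPdef
  set P' := hC.cfc g with hP'def
  have hPP : P * P = P := by
    rw [hPdef, hC.cfc_mul',
      show (fun x => f x * f x) = f from funext fun x => by by_cases h : 0 < x <;> simp [hf, h]]
  have hP'P' : P' * P' = P' := by
    rw [hP'def, hC.cfc_mul',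
      show (fun x => g x * g x) = g from funext fun x => by by_cases h : 0 < x <;> simp [hg, h]]
  have hPH : Pᴴ = P := hC.cfc_conjTranspose' f
  have hP'H : P'ᴴ = P' := hC.cfc_conjTranspose' g
  have hsum1 : P + P' = 1 := by
    rw [hPdef, hP'def, hC.cfc_add',
      show (fun x => f x + g x) = (fun _ : ℝ => (1:ℝ)) from
        funext fun x => by by_cases h : 0 < x <;> simp [hf, hg, h]]
    exact hC.cfc_one'
  -- square roots
  set SA := hA.1.cfc Real.sqrt with hSAdef
  set SB := hB.1.cfc Real.sqrt with hSBdef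
  have hSAH : SAᴴ = SA := hA.1.cfc_conjTranspose' _
  have hSBH : SBᴴ = SB := hB.1.cfc_conjTranspose' _
  have hSA2 : SA * SA = A := by
    have hfun : (fun x => Real.sqrt x * Real.sqrt x) ∘ hA.1.eigenvalues = (fun x => x) ∘ hA.1.eigenvalues :=
      funext fun i => Real.mul_self_sqrt (hA.eigenvalues_nonneg i)
    have : hA.1.cfc (fun x => Real.sqrt x * Real.sqrt x) = hA.1.cfc (fun x => x) := by
      unfold Matrix.IsHermitian.cfc; rw [hfun]
    rw [hSAdef, hA.1.cfc_mul', this, hA.1.cfc_id']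
  have hSB2 : SB * SB = B := by
    have hfun : (fun x => Real.sqrt x * Real.sqrt x) ∘ hB.1.eigenvalues = (fun x => x) ∘ hB.1.eigenvalues :=
      funext fun i => Real.mul_self_sqrt (hB.eigenvalues_nonneg i)
    have : hB.1.cfc (fun x => Real.sqrt x * Real.sqrt x) = hB.1.cfc (fun x => x) := by
      unfold Matrix.IsHermitian.cfc; rw [hfun]
    rw [hSBdef, hB.1.cfc_mul', this, hB.1.cfc_id']
  set a1 := fnorm (SA * P) with ha1
  set a2 := fnorm (SA * P') with ha2
  set b1 := fnorm (SB * P) with hb1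
  set b2 := fnorm (SB * P') with hb2
  -- trace splits
  have hA_split : (A.trace).re = a1 ^ 2 + a2 ^ 2 := by
    have h : A.trace = (P * A).trace + (P' * A).trace := by
      conv_lhs => rw [show A = (P + P') * A by rw [hsum1, one_mul], add_mul, trace_add]
    rw [h, Complex.add_re, link_lemma hSAH hPH hPP hSA2, link_lemma hSAH hP'H hP'P' hSA2]
  have hB_split : (B.trace).re = b1 ^ 2 + b2 ^ 2 := by
    have h : B.trace = (P * B).trace + (P' * B).trace := by
      conv_lhs => rw [show B = (P + P') * B by rw [hsum1, one_mul], add_mul, trace_add]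
    rw [h, Complex.add_re, link_lemma hSBH hPH hPP hSB2, link_lemma hSBH hP'H hP'P' hSB2]
  have hsum : a1 ^ 2 + a2 ^ 2 + (b1 ^ 2 + b2 ^ 2) = 1 := by
    have := congrArg Complex.re htr
    rw [Complex.add_re, hA_split, hB_split] at this
    simpa using this
  -- trace norm computation
  have h_tn : traceNorm D = a1 ^ 2 - b1 ^ 2 - (a2 ^ 2 - b2 ^ 2) := by
    have habs : hC.cfc (fun x => |x|) = (Matrix.posSemidef_conjTranspose_mul_self D).1.cfc Real.sqrt := by
      have hCsa : IsSelfAdjoint D := hC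
      have e : cfc (fun x : ℝ => x ^ 2) D = Dᴴ * D := by
        rw [cfc_pow_id (R := ℝ) D 2, hC.eq, sq]
      calc hC.cfc (fun x => |x|) = cfc (fun x => |x|) D := (hC.cfc_eq _).symm
        _ = cfc (fun x => Real.sqrt ((fun x : ℝ => x ^ 2) x)) D :=
          cfc_congr fun x _ => (Real.sqrt_sq_eq_abs x).symm
        _ = cfc Real.sqrt (cfc (fun x : ℝ => x ^ 2) D) := cfc_comp' _ _ D
        _ = cfc Real.sqrt (Dᴴ * D) := by rw [e]
        _ = _ := (Matrix.posSemidef_conjTranspose_mul_self D).1.cfc_eq _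
    have h1 : traceNorm D = ∑ i, |hC.eigenvalues i| := by
      rw [traceNorm_eq', ← habs, hC.trace_cfc', Complex.re_sum]
      simp
    have key := hC.cfc_mul' (fun x => f x - g x) (fun x => x)
    rw [hC.cfc_id'] at key
    rw [← hC.cfc_sub'] at key
    have h2 : ((P - P') * D).trace = ∑ i, ((|hC.eigenvalues i| : ℝ) : ℂ) := by
      rw [hPdef, hP'def, key, hC.trace_cfc']
      congr 1; funext i
      congr 1
      by_cases h : 0 < hC.eigenvalues i
      · simp [hf, hg, h, abs_of_pos h]
      · simp [hf, hg, h, abs_of_nonpos (not_lt.mp h)]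
    have h3 : ((P - P') * D).trace =
        (P * A).trace - (P * B).trace - ((P' * A).trace - (P' * B).trace) := by
      rw [hD, sub_mul, mul_sub, mul_sub, trace_sub, trace_sub, trace_sub]
    have h4 : traceNorm D = (((P - P') * D).trace).re := by
      rw [h1, h2, Complex.re_sum]
      simp
    have h5 : (((P - P') * D).trace).re = a1 ^ 2 - b1 ^ 2 - (a2 ^ 2 - b2 ^ 2) := by
      rw [h3]
      simp only [Complex.sub_re]
      rw [link_lemma hSAH hPH hPP hSA2, link_lemma hSBH hPH hPP hSB2,
        link_lemma hSAH hP'H hP'P' hSA2, link_lemma hSBH hP'H hP'P' hSB2]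
    rw [h4, h5]
  -- main bound on Tr(AB)
  have hexp : (A * B).trace = (P * A * P * B).trace + (P * A * P' * B).trace
      + (P' * A * P * B).trace + (P' * A * P' * B).trace := by
    have h : A * B = P * A * P * B + P * A * P' * B + P' * A * P * B + P' * A * P' * B := by
      have h1 : A * B = (P + P') * A * (P + P') * B := by rw [hsum1, one_mul, mul_one]
      rw [h1]; noncomm_ring
    rw [h, trace_add, trace_add, trace_add]
  have t11 := term_bound hSAH hSBH hPH hPP hPH hPP
  have t12 := term_bound hSAH hSBH hPH hPP hP'H hP'P'
  have t21 := term_bound hSAH hSBH hP'H hP'P' hPH hPP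
  have t22 := term_bound hSAH hSBH hP'H hP'P' hP'H hP'P'
  rw [hSA2, hSB2] at t11 t12 t21 t22
  have hAB : ((A * B).trace).re ≤ (a1 * b1 + a2 * b2) ^ 2 := by
    rw [hexp]
    simp only [Complex.add_re]
    nlinarith [t11, t12, t21, t22]
  -- finish
  have hnn := fnorm_nonneg (SA * P)
  have hnn2 := fnorm_nonneg (SA * P')
  have hnn3 := fnorm_nonneg (SB * P)
  have hnn4 := fnorm_nonneg (SB * P')
  rw [h_tn]
  nlinarith [hAB, hsum, sq_nonneg (a1 * a2 - b1 * b2), sq_nonneg (a1 * b1 + a2 * b2)]
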